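/- Let X be an enhancement of a state x of a diagram D such that [X]_A ∩ [X]_B = {X} and such that ε ∘ π_{[X]_B} ∘ d maps C_R(D) into 2R, where 2R ⊊ R. Then the A-trace tr_R(X) is not exact: there is no chain Y with dY = tr_R(X). -/
import Mathlib


attribute [local instance] Classical.propDecidable

/-- The local datum of the Khovanov differential at a crossing: changing an A-smoothing
to a B-smoothing either merges two circles `i ≠ j` of the source state (via the
relabeling `f`) or splits one circle into two circles `i ≠ j` of the target state
(via the relabeling `g`). -/
inductive KTrans (m n : ℕ) : Type
  | merge (f : Fin m → Fin n) (i j : Fin m) (hij : i ≠ j) (hf : f i = f j)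
  | split (g : Fin n → Fin m) (i j : Fin n) (hij : i ≠ j) (hg : g i = g j)

/-- The merge/split maps of the Frobenius algebra `R[q]/(q²)` acting on enhancements
(`true` = label 1 = `q`, `false` = label 0 = `1`):
merge: `q⊗q ↦ 0`, `1⊗q, q⊗1 ↦ q`, `1⊗1 ↦ 1`; split: `q ↦ q⊗q`, `1 ↦ q⊗1 + 1⊗q`. -/
noncomputable def ktransApply {R : Type*} [CommRing R] {m n : ℕ} :
    KTrans m n → (Fin m → Bool) → ((Fin n → Bool) →₀ R)
  | .merge f i j _ _, a =>
      if a i = true ∧ a j = true then 0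
      else Finsupp.single (fun l => decide (∃ k, f k = l ∧ a k = true)) 1
  | .split g i j _ _, a =>
      if a (g i) = true then Finsupp.single (a ∘ g) 1
      else Finsupp.single (Function.update (a ∘ g) i true) 1
        + Finsupp.single (Function.update (a ∘ g) j true) 1

/-- A combinatorial model of a link diagram for Viro-style Khovanov homology:
`c` crossings, states `s : Fin c → Bool` (`true` = A-smoothing), each state having
`circ s` circles, and for every A-smoothed crossing of every state the merge/split
transition datum to the state with that smoothing changed to B. -/
structure Diagram where
  c : ℕ
  circ : (Fin c → Bool) → ℕ
  trans : ∀ (s : Fin c → Bool) (t : Fin c), s t = true →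
    KTrans (circ s) (circ (Function.update s t false))

namespace Diagram

/-- Enhanced states: a state together with a `{0,1}`-labeling of its circles. -/
abbrev Enh (D : Diagram) : Type := Σ s : Fin D.c → Bool, Fin (D.circ s) → Bool

variable {R : Type*} [CommRing R]

/-- The Khovanov differential of an enhanced state:
`d X = ∑_t (-1)^{|A|_X^t} d_{c^t} X`, where `|A|_X^t` counts A-smoothings at crossings
of smaller index and `d_{c^t}` is the merge/split map (zero at B-smoothings). -/
noncomputable def dE (D : Diagram) (X : D.Enh) : D.Enh →₀ R :=
  ∑ t : Fin D.c,
    if h : X.1 t = true then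
      ((-1 : R) ^ (Finset.univ.filter fun r => r < t ∧ X.1 r = true).card) •
        Finsupp.mapDomain (fun b => (⟨Function.update X.1 t false, b⟩ : D.Enh))
          (ktransApply (D.trans X.1 t h) X.2)
    else 0

/-- The Khovanov differential on the chain module `C_R(D)`, the free `R`-module on
enhanced states. -/
noncomputable def d (D : Diagram) (Z : D.Enh →₀ R) : D.Enh →₀ R :=
  Z.sum fun e r => r • D.dE e

end Diagram

/-- Swap the labels on the two endpoint circles of a crossing arc. -/
def swapAt {n : ℕ} (e : Fin n × Fin n) (a : Fin n → Bool) : Fin n → Bool :=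
  Function.update (Function.update a e.1 (a e.2)) e.2 (a e.1)

/-- The equivalence relation `∼_A` (for `v = true`) resp. `∼_B` (for `v = false`) on
enhancements of a state, generated by swapping the labels on the two endpoint circles of
an arc of the corresponding type (`sm t = true` means an A-arc at crossing `t`, and
`ep t` gives the two circles the arc joins). -/
def RelLab {c n : ℕ} (sm : Fin c → Bool) (ep : Fin c → Fin n × Fin n) (v : Bool) :
    (Fin n → Bool) → (Fin n → Bool) → Prop :=
  Relation.ReflTransGen fun a b => ∃ t, sm t = v ∧ b = swapAt (ep t) a

/-- Connectivity of circles through arcs of a fixed type: `Conn sm ep true i j` says the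
circles `i`, `j` lie in the same A-zone (`v = false`: same B-zone). -/
def Conn {c n : ℕ} (sm : Fin c → Bool) (ep : Fin c → Fin n × Fin n) (v : Bool) :
    Fin n → Fin n → Prop :=
  Relation.ReflTransGen fun i j => ∃ t, sm t = v ∧ (ep t = (i, j) ∨ ep t = (j, i))

/-- Homogeneity of a state: no simple cycle of the state graph contains arcs of both
types (equivalently, every block of the state graph is all-A or all-B). -/
def Homog {c n : ℕ} (sm : Fin c → Bool) (ep : Fin c → Fin n × Fin n) : Prop :=
  ∀ (k : ℕ), 2 ≤ k → ∀ (te : ZMod k → Fin c) (ve : ZMod k → Fin n),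
    Function.Injective te → Function.Injective ve →
    (∀ i, ep (te i) = (ve i, ve (i + 1)) ∨ ep (te i) = (ve (i + 1), ve i)) →
    ∀ i j, sm (te i) = sm (te j)

/-- If `X` enhances a state `x` (state `s0` of the diagram `D`) with
`[X]_A ∩ [X]_B = {X}`, and `ε ∘ π_{[X]_B} ∘ d` maps `C_R(D)` into `2R` where `2R ⊊ R`
(2 is not a unit), then the (signed) A-trace `tr_R(X) = ∑_{X' ∼_A X} (±1)·X'` is not
exact: no chain `Z` satisfies `dZ = tr_R(X)`. -/
theorem trace_not_exact (R : Type*) [CommRing R] (D : Diagram) (s0 : Fin D.c → Bool)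
    (ep : Fin D.c → Fin (D.circ s0) × Fin (D.circ s0))
    (X : Fin (D.circ s0) → Bool)
    (hinter : ∀ Y, RelLab s0 ep true X Y → RelLab s0 ep false X Y → Y = X)
    (sgn : (Fin (D.circ s0) → Bool) → R)
    (hsgnX : sgn X = 1) (hsgnpm : ∀ a, sgn a = 1 ∨ sgn a = -1)
    (h2R : ∀ Z : D.Enh →₀ R, ∃ r : R,
      (∑ b ∈ Finset.univ.filter (fun b => RelLab s0 ep false X b),
        (D.d Z) ⟨s0, b⟩) = 2 * r)
    (hnotunit : ¬ ∃ u : R, 2 * u = 1) :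
    ¬ ∃ Z : D.Enh →₀ R, D.d Z
        = ∑ b ∈ Finset.univ.filter (fun b => RelLab s0 ep true X b),
            Finsupp.single (⟨s0, b⟩ : D.Enh) (sgn b) := by
  rintro ⟨Z, hZ⟩
  obtain ⟨r, hr⟩ := h2R Z
  apply hnotunit
  refine ⟨r, ?_⟩
  rw [hZ] at hr
  rw [← hr]
  have coeff : ∀ b : Fin (D.circ s0) → Bool,
      (∑ a ∈ Finset.univ.filter (fun a => RelLab s0 ep true X a),
        Finsupp.single (⟨s0, a⟩ : D.Enh) (sgn a)) ⟨s0, b⟩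
      = if RelLab s0 ep true X b then sgn b else 0 := by
    intro b
    rw [Finsupp.finset_sum_apply]
    have : ∀ a ∈ Finset.univ.filter (fun a => RelLab s0 ep true X a),
        (Finsupp.single (⟨s0, a⟩ : D.Enh) (sgn a)) ⟨s0, b⟩
        = if a = b then sgn a else 0 := by
      intro a _
      simp [Finsupp.single_apply, Sigma.mk.inj_iff]
    rw [Finset.sum_congr rfl this, Finset.sum_ite_eq']
    simp
  calc (∑ b ∈ Finset.univ.filter (fun b => RelLab s0 ep false X b),
        (∑ a ∈ Finset.univ.filter (fun a => RelLab s0 ep true X a),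
          Finsupp.single (⟨s0, a⟩ : D.Enh) (sgn a)) ⟨s0, b⟩)
      = ∑ b ∈ (Finset.univ.filter (fun b => RelLab s0 ep false X b)).filter
          (fun b => RelLab s0 ep true X b), sgn b := by
        rw [Finset.sum_congr rfl (fun b _ => coeff b)]
        simp only [Finset.sum_filter]
    _ = ∑ b ∈ ({X} : Finset (Fin (D.circ s0) → Bool)), sgn b := by
        congr 1
        ext b
        simp only [Finset.mem_filter, Finset.mem_univ, true_and, Finset.mem_singleton]
        constructor
        · rintro ⟨hB, hA⟩; exact hinter b hA hB
        · rintro rfl; exact ⟨Relation.ReflTransGen.refl, Relation.ReflTransGen.refl⟩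
    _ = 1 := by simp [hsgnX]
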